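/- For every real q in [2,3] and every x in [0,1], the q-Tsallis binary entropy satisfies (q/(2(q-1)))·2x(1-x) ≤ Hqᵀ(x) ≤ 2·Hqᵀ(1/2)·2x(1-x). -/

import Mathlib

open Real Set

/-- The `q`-Tsallis binary entropy `Hqᵀ(x) = (1 - x^q - (1-x)^q)/(q-1)`. -/
noncomputable def tsallisBin (q x : ℝ) : ℝ := (1 - x ^ q - (1 - x) ^ q) / (q - 1)

section Aux

/-! ### Lower bound -/

private lemma rpow_convex_combo (q y : ℝ) (hq2 : 2 ≤ q) (hq3 : q ≤ 3) (hy : 0 ≤ y) :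
    y ^ q ≤ (3 - q) * y ^ (2 : ℕ) + (q - 2) * y ^ (3 : ℕ) := by
  have h1 : y ^ q = (y ^ (2 : ℝ)) ^ (3 - q) * (y ^ (3 : ℝ)) ^ (q - 2) := by
    rw [← Real.rpow_mul hy, ← Real.rpow_mul hy,
      ← Real.rpow_add' hy (by intro h; nlinarith)]
    ring_nf
  have h2 := Real.geom_mean_le_arith_mean2_weighted (by linarith : (0:ℝ) ≤ 3 - q)
    (by linarith : (0:ℝ) ≤ q - 2) (Real.rpow_nonneg hy 2) (Real.rpow_nonneg hy 3)
    (by ring)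
  rw [h1]
  calc (y ^ (2:ℝ)) ^ (3 - q) * (y ^ (3:ℝ)) ^ (q - 2)
      ≤ (3 - q) * y ^ (2:ℝ) + (q - 2) * y ^ (3:ℝ) := h2
    _ = (3 - q) * y ^ (2:ℕ) + (q - 2) * y ^ (3:ℕ) := by
        rw [show (2:ℝ) = ((2:ℕ):ℝ) by norm_num, show (3:ℝ) = ((3:ℕ):ℝ) by norm_num,
          Real.rpow_natCast, Real.rpow_natCast]

private lemma tsallis_lower_core (q x : ℝ) (hq2 : 2 ≤ q) (hq3 : q ≤ 3) (hx0 : 0 ≤ x)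
    (hx1 : x ≤ 1) : q * (x * (1 - x)) ≤ 1 - x ^ q - (1 - x) ^ q := by
  have h1 := rpow_convex_combo q x hq2 hq3 hx0
  have h2 := rpow_convex_combo q (1 - x) hq2 hq3 (by linarith)
  nlinarith [h1, h2]

/-! ### Upper bound -/

private lemma tsallis_D_anti (q : ℝ) (hq2 : 2 ≤ q) (hq3 : q ≤ 3) :
    AntitoneOn (fun v : ℝ => (1 + v) ^ (q - 2) + (1 - v) ^ (q - 2)) (Ioo (0:ℝ) 1) := by
  have hder : ∀ v ∈ Ioo (0:ℝ) 1,
      HasDerivAt (fun v : ℝ => (1 + v) ^ (q - 2) + (1 - v) ^ (q - 2))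
        (1 * (q - 2) * (1 + v) ^ (q - 2 - 1) + -1 * (q - 2) * (1 - v) ^ (q - 2 - 1)) v := by
    intro v hv
    obtain ⟨hv0, hv1⟩ := hv
    have h1 : HasDerivAt (fun v : ℝ => 1 + v) 1 v := (hasDerivAt_id v).const_add 1
    have h2 : HasDerivAt (fun v : ℝ => 1 - v) (-1) v := by
      simpa using (hasDerivAt_id v).const_sub 1
    exact (h1.rpow_const (Or.inl (by positivity))).add
      (h2.rpow_const (Or.inl (by intro h; nlinarith)))
  apply antitoneOn_of_deriv_nonpos (convex_Ioo 0 1)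
  · exact fun v hv => ((hder v hv).differentiableAt).continuousAt.continuousWithinAt
  · rw [interior_Ioo]
    exact fun v hv => ((hder v hv).differentiableAt).differentiableWithinAt
  · rw [interior_Ioo]
    intro v hv
    rw [(hder v hv).deriv]
    obtain ⟨hv0, hv1⟩ := hv
    have hle : (1 + v) ^ (q - 2 - 1) ≤ (1 - v) ^ (q - 2 - 1) :=
      Real.rpow_le_rpow_of_nonpos (by linarith) (by linarith) (by linarith)
    nlinarith [hle]

private lemma tsallis_N_concave (q : ℝ) (hq2 : 2 ≤ q) (hq3 : q ≤ 3) :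
    ConcaveOn ℝ (Icc (0:ℝ) 1) (fun v : ℝ => (1 + v) ^ (q - 1) - (1 - v) ^ (q - 1)) := by
  have hder : ∀ v ∈ Ioo (0:ℝ) 1,
      HasDerivAt (fun v : ℝ => (1 + v) ^ (q - 1) - (1 - v) ^ (q - 1))
        (1 * (q - 1) * (1 + v) ^ (q - 1 - 1) - -1 * (q - 1) * (1 - v) ^ (q - 1 - 1)) v := by
    intro v hv
    obtain ⟨hv0, hv1⟩ := hv
    have h1 : HasDerivAt (fun v : ℝ => 1 + v) 1 v := (hasDerivAt_id v).const_add 1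
    have h2 : HasDerivAt (fun v : ℝ => 1 - v) (-1) v := by
      simpa using (hasDerivAt_id v).const_sub 1
    exact (h1.rpow_const (Or.inl (by positivity))).sub
      (h2.rpow_const (Or.inl (by intro h; nlinarith)))
  apply AntitoneOn.concaveOn_of_deriv (convex_Icc 0 1)
  · apply ContinuousOn.sub
    · exact ((continuous_const.add continuous_id).continuousOn).rpow_const
        (fun v hv => Or.inl (by simp at hv ⊢; nlinarith [hv.1]))
    · exact ((continuous_const.sub continuous_id).continuousOn).rpow_const
        (fun v hv => Or.inr (by linarith))
  · rw [interior_Icc]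
    exact fun v hv => ((hder v hv).differentiableAt).differentiableWithinAt
  · rw [interior_Icc]
    intro a ha b hb hab
    rw [(hder a ha).deriv, (hder b hb).deriv]
    have hD := tsallis_D_anti q hq2 hq3 ha hb hab
    simp only at hD
    have e : q - 1 - 1 = q - 2 := by ring
    rw [e]
    nlinarith [hD]

private lemma tsallis_N_slope_anti (q : ℝ) (hq2 : 2 ≤ q) (hq3 : q ≤ 3) {a b : ℝ}
    (ha : 0 < a) (hab : a ≤ b) (hb : b ≤ 1) :
    ((1 + b) ^ (q - 1) - (1 - b) ^ (q - 1)) / b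
      ≤ ((1 + a) ^ (q - 1) - (1 - a) ^ (q - 1)) / a := by
  have hb0 : 0 < b := lt_of_lt_of_le ha hab
  have h := (tsallis_N_concave q hq2 hq3).2 (show (0:ℝ) ∈ Icc (0:ℝ) 1 by norm_num)
    (show b ∈ Icc (0:ℝ) 1 by constructor <;> linarith)
    (show (0:ℝ) ≤ 1 - a / b by rw [sub_nonneg]; exact div_le_one_of_le₀ hab hb0.le)
    (show (0:ℝ) ≤ a / b by positivity) (show (1 - a / b) + a / b = 1 by ring)
  simp only [smul_eq_mul, mul_zero, zero_add] at h
  have hpt : a / b * b = a := div_mul_cancel₀ a hb0.ne'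
  have h0 : ((1:ℝ) + 0) ^ (q - 1) - (1 - 0) ^ (q - 1) = 0 := by norm_num
  rw [hpt, h0, mul_zero, zero_add] at h
  rw [div_le_div_iff₀ hb0 ha]
  have h' : a / b * ((1 + b) ^ (q - 1) - (1 - b) ^ (q - 1))
      ≤ (1 + a) ^ (q - 1) - (1 - a) ^ (q - 1) := by linarith
  calc ((1 + b) ^ (q - 1) - (1 - b) ^ (q - 1)) * a
      = (a / b * ((1 + b) ^ (q - 1) - (1 - b) ^ (q - 1))) * b := by field_simp
    _ ≤ ((1 + a) ^ (q - 1) - (1 - a) ^ (q - 1)) * b :=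
        mul_le_mul_of_nonneg_right h' hb0.le

private noncomputable def tsallisK (q w : ℝ) : ℝ :=
  ((1 + Real.sqrt w) ^ q + (1 - Real.sqrt w) ^ q) / 2

private lemma tsallisK_hasDeriv (q : ℝ) (hq2 : 2 ≤ q) {w : ℝ} (hw : w ∈ Ioo (0:ℝ) 1) :
    HasDerivAt (tsallisK q)
      ((q / 4) * (((1 + Real.sqrt w) ^ (q - 1) - (1 - Real.sqrt w) ^ (q - 1)) / Real.sqrt w))
      w := by
  obtain ⟨hw0, hw1⟩ := hw
  have hs0 : 0 < Real.sqrt w := Real.sqrt_pos.mpr hw0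
  have hs1 : Real.sqrt w < 1 := by
    rw [show (1:ℝ) = Real.sqrt 1 by simp]
    exact Real.sqrt_lt_sqrt hw0.le hw1
  have hs : HasDerivAt Real.sqrt (1 / (2 * Real.sqrt w)) w := Real.hasDerivAt_sqrt hw0.ne'
  have h1 : HasDerivAt (fun w => 1 + Real.sqrt w) (1 / (2 * Real.sqrt w)) w := hs.const_add 1
  have h2 : HasDerivAt (fun w => 1 - Real.sqrt w) (-(1 / (2 * Real.sqrt w))) w := hs.const_sub 1
  have h1' := h1.rpow_const (p := q) (Or.inl (by positivity))
  have h2' := h2.rpow_const (p := q) (Or.inl (ne_of_gt (by linarith : (0:ℝ) < 1 - Real.sqrt w)))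
  have := (h1'.add h2').div_const 2
  exact this.congr_deriv (by field_simp; ring)

private lemma tsallisK_concave (q : ℝ) (hq2 : 2 ≤ q) (hq3 : q ≤ 3) :
    ConcaveOn ℝ (Icc (0:ℝ) 1) (tsallisK q) := by
  apply AntitoneOn.concaveOn_of_deriv (convex_Icc 0 1)
  · apply ContinuousOn.div_const
    apply ContinuousOn.add
    · exact ((continuous_const.add Real.continuous_sqrt).continuousOn).rpow_const
        (fun w hw => Or.inr (by linarith))
    · exact ((continuous_const.sub Real.continuous_sqrt).continuousOn).rpow_const
        (fun w hw => Or.inr (by linarith))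
  · rw [interior_Icc]
    exact fun w hw => (tsallisK_hasDeriv q hq2 hw).differentiableAt.differentiableWithinAt
  · rw [interior_Icc]
    intro a ha b hb hab
    rw [(tsallisK_hasDeriv q hq2 ha).deriv, (tsallisK_hasDeriv q hq2 hb).deriv]
    have hsa : 0 < Real.sqrt a := Real.sqrt_pos.mpr ha.1
    have hsab : Real.sqrt a ≤ Real.sqrt b := Real.sqrt_le_sqrt hab
    have hsb : Real.sqrt b ≤ 1 := by
      rw [show (1:ℝ) = Real.sqrt 1 by simp]
      exact Real.sqrt_le_sqrt hb.2.le
    have := tsallis_N_slope_anti q hq2 hq3 hsa hsab hsb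
    have hq0 : (0:ℝ) ≤ q / 4 := by linarith
    exact mul_le_mul_of_nonneg_left this hq0

private lemma tsallisK_chord (q : ℝ) (hq2 : 2 ≤ q) (hq3 : q ≤ 3) {w : ℝ}
    (hw0 : 0 ≤ w) (hw1 : w ≤ 1) :
    (1 - w) * 1 + w * ((2:ℝ) ^ q / 2) ≤ tsallisK q w := by
  have hK0 : tsallisK q 0 = 1 := by
    simp [tsallisK, Real.sqrt_zero, Real.one_rpow]
  have hK1 : tsallisK q 1 = (2:ℝ) ^ q / 2 := by
    simp [tsallisK, Real.sqrt_one, Real.zero_rpow (by positivity : q ≠ 0)]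
    norm_num [show (1:ℝ) + 1 = 2 by norm_num]
  have h := (tsallisK_concave q hq2 hq3).2 (show (0:ℝ) ∈ Icc (0:ℝ) 1 by norm_num)
    (show (1:ℝ) ∈ Icc (0:ℝ) 1 by norm_num)
    (show (0:ℝ) ≤ 1 - w by linarith) (show (0:ℝ) ≤ w by linarith)
    (show (1 - w) + w = 1 by ring)
  simp only [smul_eq_mul, mul_zero, mul_one, zero_add] at h
  rw [hK0, hK1] at h
  exact h

private lemma tsallis_upper_core (q x : ℝ) (hq2 : 2 ≤ q) (hq3 : q ≤ 3) (hx0 : 0 ≤ x)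
    (hx : x ≤ 1/2) :
    1 - x ^ q - (1 - x) ^ q ≤ 4 * (1 - (2:ℝ) ^ (1 - q)) * (x * (1 - x)) := by
  set w : ℝ := (1 - 2*x)^2 with hw
  have hw0 : 0 ≤ w := sq_nonneg _
  have hw1 : w ≤ 1 := by nlinarith
  have hsw : Real.sqrt w = 1 - 2*x := by rw [hw, Real.sqrt_sq (by linarith)]
  have hKw : tsallisK q w = ((2:ℝ)^q * (1-x)^q + (2:ℝ)^q * x^q) / 2 := by
    rw [tsallisK, hsw, show (1:ℝ) + (1 - 2*x) = 2*(1-x) by ring,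
      show (1:ℝ) - (1 - 2*x) = 2*x by ring,
      Real.mul_rpow (by norm_num) (by linarith), Real.mul_rpow (by norm_num) hx0]
  have hc := tsallisK_chord q hq2 hq3 hw0 hw1
  rw [hKw] at hc
  have hA : (0:ℝ) < (2:ℝ)^q := Real.rpow_pos_of_pos (by norm_num) q
  have hAB : (2:ℝ)^q * (2:ℝ)^(1-q) = 2 := by
    rw [← Real.rpow_add (by norm_num)]; norm_num
  have hABs : (2:ℝ)^q * (2:ℝ)^(1-q) * (x*(1-x)) = 2*(x*(1-x)) := by rw [hAB]
  have hwx : w = 1 - 4*(x*(1-x)) := by rw [hw]; ring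
  rw [hwx] at hc
  have hgoal : (2:ℝ)^q * (1 - x ^ q - (1 - x) ^ q)
      ≤ (2:ℝ)^q * (4 * (1 - (2:ℝ)^(1-q)) * (x * (1 - x))) := by
    nlinarith [hc, hABs]
  exact le_of_mul_le_mul_left hgoal hA

private lemma tsallis_upper (q x : ℝ) (hq2 : 2 ≤ q) (hq3 : q ≤ 3) (hx0 : 0 ≤ x)
    (hx1 : x ≤ 1) :
    1 - x ^ q - (1 - x) ^ q ≤ 4 * (1 - (2:ℝ) ^ (1 - q)) * (x * (1 - x)) := by
  rcases le_total x (1/2) with h | h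
  · exact tsallis_upper_core q x hq2 hq3 hx0 h
  · have := tsallis_upper_core q (1 - x) hq2 hq3 (by linarith) (by linarith)
    rw [show (1:ℝ) - (1 - x) = x by ring] at this
    calc 1 - x ^ q - (1 - x) ^ q = 1 - (1-x) ^ q - x ^ q := by ring
      _ ≤ 4 * (1 - (2:ℝ) ^ (1 - q)) * ((1-x) * x) := this
      _ = 4 * (1 - (2:ℝ) ^ (1 - q)) * (x * (1 - x)) := by ring

end Aux

/-- For `q ∈ [2,3]` and `x ∈ [0,1]`,
`(q/(2(q-1)))·2x(1-x) ≤ Hqᵀ(x) ≤ 2·Hqᵀ(1/2)·2x(1-x)`. -/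
theorem tsallis_binary_entropy_bounds_two_le_q_le_three (q x : ℝ) (hq2 : 2 ≤ q) (hq3 : q ≤ 3)
    (hx0 : 0 ≤ x) (hx1 : x ≤ 1) :
    (q / (2 * (q - 1))) * (2 * x * (1 - x)) ≤ tsallisBin q x ∧
      tsallisBin q x ≤ 2 * tsallisBin q (1 / 2) * (2 * x * (1 - x)) := by
  have hq1 : (0:ℝ) < q - 1 := by linarith
  constructor
  · rw [tsallisBin, le_div_iff₀ hq1]
    have e : q / (2 * (q - 1)) * (2 * x * (1 - x)) * (q - 1) = q * (x * (1 - x)) := by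
      field_simp
    rw [e]
    exact tsallis_lower_core q x hq2 hq3 hx0 hx1
  · have hhalf : tsallisBin q (1/2) = (1 - (2:ℝ) ^ (1 - q)) / (q - 1) := by
      rw [tsallisBin]
      have h12 : ((1:ℝ) - 1/2) = 1/2 := by norm_num
      rw [h12]
      have hhq : ((1:ℝ)/2) ^ q = ((2:ℝ) ^ q)⁻¹ := by
        rw [one_div, Real.inv_rpow (by norm_num : (0:ℝ) ≤ 2)]
      have h2q : (2:ℝ) ^ (1 - q) = 2 / (2:ℝ) ^ q := by
        rw [Real.rpow_sub (by norm_num : (0:ℝ) < 2), Real.rpow_one]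
      rw [hhq, h2q]
      congr 1
      have hA : ((2:ℝ) ^ q) ≠ 0 := ne_of_gt (Real.rpow_pos_of_pos (by norm_num) q)
      field_simp
      ring
    rw [tsallisBin, hhalf, div_le_iff₀ hq1]
    have e : 2 * ((1 - (2:ℝ) ^ (1 - q)) / (q - 1)) * (2 * x * (1 - x)) * (q - 1)
        = 4 * (1 - (2:ℝ) ^ (1 - q)) * (x * (1 - x)) := by
      field_simp
      ring
    rw [e]
    exact tsallis_upper q x hq2 hq3 hx0 hx1
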